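/- Assume b₁, …, b₅ are pairwise distinct nonzero complex numbers. For every point (x, y₇, y₈) ∈ ℂ³ at which ǔf₁₄, ǔf₁₅ and ǔf₁₆ all vanish, the 3×3 matrix whose (i,j)-entry is the partial derivative of ǔf₍₁₃₊ᵢ₎ with respect to the j-th variable (variables ordered x, y₇, y₈), evaluated at (x, y₇, y₈), has rank 2. In particular this holds at the point (0, 0, 0). -/
import Mathlib


open MvPolynomial

/-- `ǔk₃(x) = (1−b₁x)(1−b₂x)(1−b₃x)` in `ℂ[x,y₇,y₈]` (variables `X 0 = x`, `X 1 = y₇`,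
`X 2 = y₈`). -/
noncomputable def uk3X4 (b : Fin 5 → ℂ) : MvPolynomial (Fin 3) ℂ :=
  (1 - C (b 0) * X 0) * (1 - C (b 1) * X 0) * (1 - C (b 2) * X 0)

/-- `ǔk₂(x) = (1−b₄x)(1−b₅x)` in `ℂ[x,y₇,y₈]`. -/
noncomputable def uk2X4 (b : Fin 5 → ℂ) : MvPolynomial (Fin 3) ℂ :=
  (1 - C (b 3) * X 0) * (1 - C (b 4) * X 0)

/-- The triple `(ǔf₁₄, ǔf₁₅, ǔf₁₆)` defining the affine chart of the `(3,7,8)` curve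
containing the point at infinity. -/
noncomputable def ufX4 (b : Fin 5 → ℂ) : Fin 3 → MvPolynomial (Fin 3) ℂ :=
  ![(X 1) ^ 2 - X 2 * (X 0 * uk2X4 b),
    X 1 * X 2 - X 0 * uk2X4 b * uk3X4 b,
    (X 2) ^ 2 - X 1 * uk3X4 b]

private lemma rank_le_two_aux {M : Matrix (Fin 3) (Fin 3) ℂ} (w : Fin 3 → ℂ)
    (hw : w ≠ 0) (h : Matrix.vecMul w M = 0) : M.rank ≤ 2 := by
  have hdet : M.det = 0 := by
    rw [← Matrix.exists_vecMul_eq_zero_iff]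
    exact ⟨w, hw, h⟩
  obtain ⟨v, hv, hMv⟩ := Matrix.exists_mulVec_eq_zero_iff.mpr hdet
  have h1 : 0 < Module.finrank ℂ (LinearMap.ker M.mulVecLin) := by
    rw [Module.finrank_pos_iff_exists_ne_zero]
    exact ⟨⟨v, by simpa [LinearMap.mem_ker] using hMv⟩, by simpa using hv⟩
  have h2 : Module.finrank ℂ (LinearMap.range M.mulVecLin)
      + Module.finrank ℂ (LinearMap.ker M.mulVecLin) = 3 := by
    rw [LinearMap.finrank_range_add_finrank_ker]
    simp [Module.finrank_fin_fun]
  have h3 : M.rank = Module.finrank ℂ (LinearMap.range M.mulVecLin) := rfl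
  omega

private lemma two_le_rank_aux {M : Matrix (Fin 3) (Fin 3) ℂ} (i₁ i₂ j₁ j₂ : Fin 3)
    (h : M i₁ j₁ * M i₂ j₂ - M i₁ j₂ * M i₂ j₁ ≠ 0) : 2 ≤ M.rank := by
  classical
  set P : Matrix (Fin 2) (Fin 3) ℂ := Matrix.of fun k l => if l = ![i₁, i₂] k then 1 else 0
  set Q : Matrix (Fin 3) (Fin 2) ℂ := Matrix.of fun l k => if l = ![j₁, j₂] k then 1 else 0
  have hPQ : ∀ a b₂, (P * M * Q) a b₂ = M (![i₁, i₂] a) (![j₁, j₂] b₂) := by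
    intro a c
    simp [P, Q, Matrix.mul_apply, Finset.mul_sum, ite_mul, mul_ite,
      Finset.sum_ite_eq, Finset.sum_ite_eq']
  have hdet : (P * M * Q).det ≠ 0 := by
    rw [Matrix.det_fin_two, hPQ, hPQ, hPQ, hPQ]
    simpa using h
  have hunit : IsUnit (P * M * Q) := by
    rw [Matrix.isUnit_iff_isUnit_det]
    exact isUnit_iff_ne_zero.mpr hdet
  have h2 : (P * M * Q).rank = 2 := by
    rw [Matrix.rank_of_isUnit _ hunit]; simp
  calc (2 : ℕ) = (P * M * Q).rank := h2.symm
    _ ≤ (M * Q).rank := by rw [Matrix.mul_assoc]; exact Matrix.rank_mul_le_right _ _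
    _ ≤ M.rank := Matrix.rank_mul_le_left _ _


private lemma coreX4 (B0 B1 B2 B3 B4 x u v g K3 Dg Dk3 : ℂ)
    (h01 : B0 ≠ B1) (h02 : B0 ≠ B2) (h12 : B1 ≠ B2) (h34 : B3 ≠ B4)
    (h03 : B0 ≠ B3) (h04 : B0 ≠ B4) (h13 : B1 ≠ B3) (h14 : B1 ≠ B4)
    (h23 : B2 ≠ B3) (h24 : B2 ≠ B4)
    (n0 : B0 ≠ 0) (n1 : B1 ≠ 0) (n2 : B2 ≠ 0) (n3 : B3 ≠ 0) (n4 : B4 ≠ 0)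
    (hg : g = x*((1-B3*x)*(1-B4*x)))
    (hK3 : K3 = (1-B0*x)*(1-B1*x)*(1-B2*x))
    (hDg : Dg = (1-B3*x)*(1-B4*x) + x*(-(B3*(1-B4*x)) - B4*(1-B3*x)))
    (hDk3 : Dk3 = -(B0*((1-B1*x)*(1-B2*x))) - B1*((1-B0*x)*(1-B2*x)) - B2*((1-B0*x)*(1-B1*x)))
    (e1 : u^2 - v*g = 0) (e2 : u*v - g*K3 = 0) (e3 : v^2 - u*K3 = 0) :
    (!![-(v*Dg), 2*u, -g;
        -(Dg*K3 + g*Dk3), v, u;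
        -(u*Dk3), -K3, 2*v]).rank = 2 := by
  set M : Matrix (Fin 3) (Fin 3) ℂ :=
    !![-(v*Dg), 2*u, -g;
       -(Dg*K3 + g*Dk3), v, u;
       -(u*Dk3), -K3, 2*v] with hM
  have h00 : M 0 0 = -(v*Dg) := rfl
  have h01e : M 0 1 = 2*u := rfl
  have h02e : M 0 2 = -g := rfl
  have h10 : M 1 0 = -(Dg*K3 + g*Dk3) := rfl
  have h11 : M 1 1 = v := rfl
  have h12e : M 1 2 = u := rfl
  have h20 : M 2 0 = -(u*Dk3) := rfl
  have h21 : M 2 1 = -K3 := rfl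
  have h22 : M 2 2 = 2*v := rfl
  have hvec1 : Matrix.vecMul ![K3, -v, u] M = 0 := by
    funext j
    fin_cases j
    · simp [hM, Matrix.vecMul, dotProduct, Fin.sum_univ_three]
      linear_combination (-Dk3)*e1
    · simp [hM, Matrix.vecMul, dotProduct, Fin.sum_univ_three]
      linear_combination -e3
    · simp [hM, Matrix.vecMul, dotProduct, Fin.sum_univ_three]
      linear_combination e2
  have hvec2 : Matrix.vecMul ![v, -u, g] M = 0 := by
    funext j
    fin_cases j
    · simp [hM, Matrix.vecMul, dotProduct, Fin.sum_univ_three]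
      linear_combination (-Dg)*e3
    · simp [hM, Matrix.vecMul, dotProduct, Fin.sum_univ_three]
      linear_combination e2
    · simp [hM, Matrix.vecMul, dotProduct, Fin.sum_univ_three]
      linear_combination -e1
  rcases eq_or_ne u 0 with hu | hu
  · have hv : v = 0 := by
      have h2 : v^2 = 0 := by linear_combination e3 + K3*hu
      exact pow_eq_zero_iff (by norm_num : (2:ℕ) ≠ 0) |>.mp h2
    subst hu; subst hv
    have hgK : g*K3 = 0 := by linear_combination -e2
    rcases eq_or_ne K3 0 with hK30 | hK3ne
    · have hK3x : (1-B0*x)*(1-B1*x)*(1-B2*x) = 0 := by rw [← hK3]; exact hK30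
      obtain ⟨hgne, hDk3ne⟩ : g ≠ 0 ∧ Dk3 ≠ 0 := by
        have hroot : ∀ y z : ℂ, 1 - y*x = 0 → y ≠ z → 1 - z*x ≠ 0 := by
          intro y z hy hyz hz
          have hx : x ≠ 0 := by intro h; rw [h] at hy; norm_num at hy
          exact hyz (mul_right_cancel₀ hx (by linear_combination hz - hy))
        rcases mul_eq_zero.mp hK3x with h' | c2
        · rcases mul_eq_zero.mp h' with c0 | c1
          · have hx : x ≠ 0 := by intro h; rw [h] at c0; norm_num at c0
            constructor
            · rw [hg]
              exact mul_ne_zero hx (mul_ne_zero (hroot _ _ c0 h03) (hroot _ _ c0 h04))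
            · have hD : Dk3 = -(B0*((1-B1*x)*(1-B2*x))) := by
                rw [hDk3]; linear_combination (-(B1*(1-B2*x)) - B2*(1-B1*x)) * c0
              rw [hD]
              exact neg_ne_zero.mpr (mul_ne_zero n0
                (mul_ne_zero (hroot _ _ c0 h01) (hroot _ _ c0 h02)))
          · have hx : x ≠ 0 := by intro h; rw [h] at c1; norm_num at c1
            constructor
            · rw [hg]
              exact mul_ne_zero hx (mul_ne_zero (hroot _ _ c1 h13) (hroot _ _ c1 h14))
            · have hD : Dk3 = -(B1*((1-B0*x)*(1-B2*x))) := by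
                rw [hDk3]; linear_combination (-(B0*(1-B2*x)) - B2*(1-B0*x)) * c1
              rw [hD]
              exact neg_ne_zero.mpr (mul_ne_zero n1
                (mul_ne_zero (hroot _ _ c1 h01.symm) (hroot _ _ c1 h12)))
        · have hx : x ≠ 0 := by intro h; rw [h] at c2; norm_num at c2
          constructor
          · rw [hg]
            exact mul_ne_zero hx (mul_ne_zero (hroot _ _ c2 h23) (hroot _ _ c2 h24))
          · have hD : Dk3 = -(B2*((1-B0*x)*(1-B1*x))) := by
              rw [hDk3]; linear_combination (-(B0*(1-B1*x)) - B1*(1-B0*x)) * c2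
            rw [hD]
            exact neg_ne_zero.mpr (mul_ne_zero n2
              (mul_ne_zero (hroot _ _ c2 h02.symm) (hroot _ _ c2 h12.symm)))
      refine le_antisymm (rank_le_two_aux ![(0:ℂ), -0, g] ?_ hvec2) ?_
      · intro hw; exact hgne (by simpa using congrFun hw 2)
      · apply two_le_rank_aux 0 1 0 2
        have hval : M 0 0 * M 1 2 - M 0 2 * M 1 0 = -(g^2*Dk3) := by
          rw [h00, h12e, h02e, h10]; linear_combination (-(g*Dg))*hK30
        rw [hval]
        exact neg_ne_zero.mpr (mul_ne_zero (pow_ne_zero 2 hgne) hDk3ne)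
    · have hg0 : g = 0 := (mul_eq_zero.mp hgK).resolve_right hK3ne
      have hDgne : Dg ≠ 0 := by
        have hgx : x * ((1-B3*x)*(1-B4*x)) = 0 := by rw [← hg]; exact hg0
        rcases mul_eq_zero.mp hgx with hx0 | hK20
        · have h1 : Dg = 1 := by rw [hDg, hx0]; ring
          rw [h1]; exact one_ne_zero
        · rcases mul_eq_zero.mp hK20 with c3 | c4
          · have hx : x ≠ 0 := by intro h; rw [h] at c3; norm_num at c3
            have hf4 : 1 - B4*x ≠ 0 := by
              intro h; exact h34 (mul_right_cancel₀ hx (by linear_combination h - c3))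
            have h1 : Dg = -(1-B4*x) := by
              rw [hDg]; linear_combination (2*(1-B4*x) - B4*x) * c3
            rw [h1]; exact neg_ne_zero.mpr hf4
          · have hx : x ≠ 0 := by intro h; rw [h] at c4; norm_num at c4
            have hf3 : 1 - B3*x ≠ 0 := by
              intro h; exact h34 (mul_right_cancel₀ hx (by linear_combination c4 - h))
            have h1 : Dg = -(1-B3*x) := by
              rw [hDg]; linear_combination (2*(1-B3*x) - B3*x) * c4
            rw [h1]; exact neg_ne_zero.mpr hf3
      refine le_antisymm (rank_le_two_aux ![K3, -0, 0] ?_ hvec1) ?_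
      · intro hw; exact hK3ne (by simpa using congrFun hw 0)
      · apply two_le_rank_aux 1 2 0 1
        have hval : M 1 0 * M 2 1 - M 1 1 * M 2 0 = Dg*K3^2 := by
          rw [h10, h21, h11, h20]; linear_combination (Dk3*K3)*hg0
        rw [hval]
        exact mul_ne_zero hDgne (pow_ne_zero 2 hK3ne)
  · have hv : v ≠ 0 := by
      intro hv0
      apply hu
      have h2 : u^2 = 0 := by linear_combination e1 + g*hv0
      exact pow_eq_zero_iff (by norm_num : (2:ℕ) ≠ 0) |>.mp h2
    refine le_antisymm (rank_le_two_aux ![K3, -v, u] ?_ hvec1) ?_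
    · intro hw; exact hu (by simpa using congrFun hw 2)
    · apply two_le_rank_aux 0 2 1 2
      have hval : M 0 1 * M 2 2 - M 0 2 * M 2 1 = 3*(u*v) := by
        rw [h01e, h22, h02e, h21]; linear_combination e2
      rw [hval]
      exact mul_ne_zero three_ne_zero (mul_ne_zero hu hv)


/-- For pairwise distinct nonzero `b₁, …, b₅`, at every common zero `(x, y₇, y₈) ∈ ℂ³` of
`ǔf₁₄, ǔf₁₅, ǔf₁₆`, the Jacobian matrix has rank `2`; in particular this holds at
`(0, 0, 0)`, which is a common zero. -/
theorem rank_uU4 (b : Fin 5 → ℂ) (hb : Function.Injective b) (hb0 : ∀ i, b i ≠ 0) :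
    (∀ p : Fin 3 → ℂ, (∀ i : Fin 3, MvPolynomial.eval p (ufX4 b i) = 0) →
      (Matrix.of fun i j : Fin 3 =>
          MvPolynomial.eval p (MvPolynomial.pderiv j (ufX4 b i))).rank = 2) ∧
    (∀ i : Fin 3, MvPolynomial.eval (fun _ => (0 : ℂ)) (ufX4 b i) = 0) ∧
    (Matrix.of fun i j : Fin 3 =>
        MvPolynomial.eval (fun _ => (0 : ℂ)) (MvPolynomial.pderiv j (ufX4 b i))).rank = 2 := by
  have key : ∀ p : Fin 3 → ℂ, (∀ i : Fin 3, MvPolynomial.eval p (ufX4 b i) = 0) →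
      (Matrix.of fun i j : Fin 3 =>
          MvPolynomial.eval p (MvPolynomial.pderiv j (ufX4 b i))).rank = 2 := by
    intro p hp
    have hE : (Matrix.of fun i j : Fin 3 =>
        MvPolynomial.eval p (MvPolynomial.pderiv j (ufX4 b i))) =
        !![-(p 2*((1-b 3*p 0)*(1-b 4*p 0) + p 0*(-(b 3*(1-b 4*p 0)) - b 4*(1-b 3*p 0)))), 2*p 1, -(p 0*((1-b 3*p 0)*(1-b 4*p 0)));
          -(((1-b 3*p 0)*(1-b 4*p 0) + p 0*(-(b 3*(1-b 4*p 0)) - b 4*(1-b 3*p 0)))*((1-b 0*p 0)*(1-b 1*p 0)*(1-b 2*p 0)) + (p 0*((1-b 3*p 0)*(1-b 4*p 0)))*(-(b 0*((1-b 1*p 0)*(1-b 2*p 0))) - b 1*((1-b 0*p 0)*(1-b 2*p 0)) - b 2*((1-b 0*p 0)*(1-b 1*p 0)))), p 2, p 1;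
          -(p 1*(-(b 0*((1-b 1*p 0)*(1-b 2*p 0))) - b 1*((1-b 0*p 0)*(1-b 2*p 0)) - b 2*((1-b 0*p 0)*(1-b 1*p 0)))), -((1-b 0*p 0)*(1-b 1*p 0)*(1-b 2*p 0)), 2*p 2] := by
      ext i j
      fin_cases i <;> fin_cases j <;>
        (simp [ufX4, uk2X4, uk3X4, pderiv_mul]; try ring) <;> tauto
    have e1 : (p 1)^2 - p 2*(p 0*((1-b 3*p 0)*(1-b 4*p 0))) = 0 := by
      have h := hp 0; simp [ufX4, uk2X4, uk3X4] at h; linear_combination h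
    have e2 : p 1*p 2 - (p 0*((1-b 3*p 0)*(1-b 4*p 0)))*((1-b 0*p 0)*(1-b 1*p 0)*(1-b 2*p 0)) = 0 := by
      have h := hp 1; simp [ufX4, uk2X4, uk3X4] at h; linear_combination h
    have e3 : (p 2)^2 - p 1*((1-b 0*p 0)*(1-b 1*p 0)*(1-b 2*p 0)) = 0 := by
      have h := hp 2; simp [ufX4, uk2X4, uk3X4] at h; linear_combination h
    rw [hE]
    exact coreX4 (b 0) (b 1) (b 2) (b 3) (b 4) (p 0) (p 1) (p 2) _ _ _ _
      (hb.ne (by decide)) (hb.ne (by decide)) (hb.ne (by decide)) (hb.ne (by decide))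
      (hb.ne (by decide)) (hb.ne (by decide)) (hb.ne (by decide)) (hb.ne (by decide))
      (hb.ne (by decide)) (hb.ne (by decide))
      (hb0 0) (hb0 1) (hb0 2) (hb0 3) (hb0 4)
      rfl rfl rfl rfl e1 e2 e3
  refine ⟨key, ?_, key _ ?_⟩ <;>
    · intro i; fin_cases i <;> simp [ufX4, uk2X4, uk3X4]
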